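/- Let 0 < p < 1/j and 0 < q < 1. Let V₁,…,V_j be {0,1}-valued random variables such that P(V_i = 0 for all i) = 1 - jp and, for each i, P(V_i = 1 and V_ℓ = 0 for all ℓ ≠ i) = p. Let W₁,…,W_j be independent {0,1}-valued random variables with P(W_i = 1) = q. Then there exists a coupling of (V₁,…,V_j) and (W₁,…,W_j) on a common probability space (preserving each marginal law) such that P(V_i = W_i for all i) ≥ 1 - j|p - q| - j(j-1)q². -/

import Mathlib

open MeasureTheory ProbabilityTheory
open scoped ENNReal

lemma exists_max_coupling {S : Type*} [MeasurableSpace S] [MeasurableSingletonClass S]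
    [Countable S] (ρ σ : Measure S) [IsProbabilityMeasure ρ] [IsProbabilityMeasure σ] :
    ∃ ν : Measure (S × S), IsProbabilityMeasure ν ∧ ν.map Prod.fst = ρ ∧ ν.map Prod.snd = σ ∧
      ∑' x, min (ρ {x}) (σ {x}) ≤ ν {x | x.1 = x.2} := by
  classical
  set m : S → ℝ≥0∞ := fun x => min (ρ {x}) (σ {x}) with hm
  set D : Measure (S × S) := Measure.sum (fun x => m x • Measure.dirac (x, x)) with hD
  set ρ' : Measure S := Measure.sum (fun x => (ρ {x} - m x) • Measure.dirac x) with hρ'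
  set σ' : Measure S := Measure.sum (fun x => (σ {x} - m x) • Measure.dirac x) with hσ'
  have hdiagmeas : MeasurableSet {x : S × S | x.1 = x.2} := (Set.to_countable _).measurableSet
  have hρ1 : ∑' x, ρ {x} = 1 := by
    have := ρ.sum_smul_dirac
    calc ∑' x, ρ {x} = Measure.sum (fun x => ρ {x} • Measure.dirac x) Set.univ := by
          rw [Measure.sum_apply _ MeasurableSet.univ]; simp
      _ = 1 := by rw [this]; simp
  have hσ1 : ∑' x, σ {x} = 1 := by
    have := σ.sum_smul_dirac
    calc ∑' x, σ {x} = Measure.sum (fun x => σ {x} • Measure.dirac x) Set.univ := by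
          rw [Measure.sum_apply _ MeasurableSet.univ]; simp
      _ = 1 := by rw [this]; simp
  have hmρ : ∀ x, m x ≤ ρ {x} := fun x => min_le_left _ _
  have hmσ : ∀ x, m x ≤ σ {x} := fun x => min_le_right _ _
  set T : ℝ≥0∞ := ∑' x, m x with hT
  have hT1 : T ≤ 1 := hρ1 ▸ ENNReal.tsum_le_tsum hmρ
  have hρ'univ : ρ' Set.univ = ∑' x, (ρ {x} - m x) := by
    rw [hρ', Measure.sum_apply _ MeasurableSet.univ]; simp
  have hσ'univ : σ' Set.univ = ∑' x, (σ {x} - m x) := by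
    rw [hσ', Measure.sum_apply _ MeasurableSet.univ]; simp
  have hρ'T : ρ' Set.univ + T = 1 := by
    rw [hρ'univ, hT, ← ENNReal.tsum_add, ← hρ1]
    exact tsum_congr fun x => tsub_add_cancel_of_le (hmρ x)
  have hσ'T : σ' Set.univ + T = 1 := by
    rw [hσ'univ, hT, ← ENNReal.tsum_add, ← hσ1]
    exact tsum_congr fun x => tsub_add_cancel_of_le (hmσ x)
  set ε : ℝ≥0∞ := ρ' Set.univ with hε
  have hεσ : σ' Set.univ = ε := by
    have hTne : T ≠ ∞ := (lt_of_le_of_lt hT1 ENNReal.one_lt_top).ne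
    have h1 : ρ' Set.univ = 1 - T := ENNReal.eq_sub_of_add_eq hTne hρ'T
    have h2 : σ' Set.univ = 1 - T := ENNReal.eq_sub_of_add_eq hTne hσ'T
    rw [h2, hε, h1]
  have hε1 : ε ≤ 1 := by rw [hε]; calc ρ' Set.univ ≤ ρ' Set.univ + T := le_self_add
                                      _ = 1 := hρ'T
  have hεne : ε ≠ ∞ := (hε1.trans_lt (by norm_num)).ne
  -- finiteness instances
  haveI : IsFiniteMeasure ρ' := ⟨by rw [← hε] at *; exact hε1.trans_lt (by norm_num)⟩
  haveI : IsFiniteMeasure σ' := ⟨by rw [hεσ]; exact hε1.trans_lt (by norm_num)⟩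
  -- marginals of D
  have hDfst : D.map Prod.fst = Measure.sum (fun x => m x • Measure.dirac x) := by
    rw [hD, Measure.map_sum measurable_fst.aemeasurable]
    congr 1; funext x
    rw [Measure.map_smul, Measure.map_dirac' measurable_fst]
  have hDsnd : D.map Prod.snd = Measure.sum (fun x => m x • Measure.dirac x) := by
    rw [hD, Measure.map_sum measurable_snd.aemeasurable]
    congr 1; funext x
    rw [Measure.map_smul, Measure.map_dirac' measurable_snd]
  have hdecρ : Measure.sum (fun x => m x • Measure.dirac x) + ρ' = ρ := by
    rw [hρ', Measure.sum_add_sum]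
    have : (fun x => m x • Measure.dirac x + (ρ {x} - m x) • Measure.dirac x)
        = fun x => ρ {x} • Measure.dirac x := by
      funext x
      rw [← add_smul, add_tsub_cancel_of_le (hmρ x)]
    rw [this, ρ.sum_smul_dirac]
  have hdecσ : Measure.sum (fun x => m x • Measure.dirac x) + σ' = σ := by
    rw [hσ', Measure.sum_add_sum]
    have : (fun x => m x • Measure.dirac x + (σ {x} - m x) • Measure.dirac x)
        = fun x => σ {x} • Measure.dirac x := by
      funext x
      rw [← add_smul, add_tsub_cancel_of_le (hmσ x)]
    rw [this, σ.sum_smul_dirac]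
  have hDuniv : D Set.univ = T := by
    rw [hD, Measure.sum_apply _ MeasurableSet.univ]; simp [hT]
  have hDdiag : D {x : S × S | x.1 = x.2} = T := by
    rw [hD, Measure.sum_apply _ hdiagmeas, hT]
    refine tsum_congr fun x => ?_
    rw [Measure.smul_apply, Measure.dirac_apply' _ hdiagmeas]
    simp [Set.indicator_of_mem (show (x, x) ∈ {x : S × S | x.1 = x.2} from rfl)]
  by_cases hε0 : ε = 0
  · -- ρ' = σ' = 0, take ν = D
    have hρ'0 : ρ' = 0 := Measure.measure_univ_eq_zero.mp (hε ▸ hε0)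
    have hσ'0 : σ' = 0 := Measure.measure_univ_eq_zero.mp (hεσ.trans hε0)
    have hT' : T = 1 := by rw [← hρ'T, hε0, zero_add]
    refine ⟨D, ⟨by rw [hDuniv, hT']⟩, ?_, ?_, ?_⟩
    · rw [hDfst, ← hdecρ, hρ'0, add_zero]
    · rw [hDsnd, ← hdecσ, hσ'0, add_zero]
    · rw [hDdiag]
  · set ν : Measure (S × S) := D + ε⁻¹ • (ρ'.prod σ') with hν
    have hεinv : ε⁻¹ * ε = 1 := ENNReal.inv_mul_cancel hε0 hεne
    have hproduniv : (ρ'.prod σ') Set.univ = ε * ε := by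
      rw [← Set.univ_prod_univ, Measure.prod_prod, ← hε, hεσ]
    refine ⟨ν, ⟨?_⟩, ?_, ?_, ?_⟩
    · rw [hν, Measure.add_apply, hDuniv, Measure.smul_apply, smul_eq_mul, hproduniv,
        ← mul_assoc, hεinv, one_mul, add_comm]
      exact hρ'T ▸ by rw [hε]
    · rw [hν, Measure.map_add _ _ measurable_fst, hDfst, Measure.map_smul,
        Measure.map_fst_prod, hεσ, smul_smul, hεinv, one_smul, hdecρ]
    · rw [hν, Measure.map_add _ _ measurable_snd, hDsnd, Measure.map_smul,
        Measure.map_snd_prod, ← hε, smul_smul, hεinv, one_smul, hdecσ]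
    · rw [hν, Measure.add_apply, hDdiag]
      exact le_self_add

lemma arith_lemma (j : ℕ) (hj : 1 ≤ j) (p q : ℝ) (hp0 : 0 < p) (hq0 : 0 < q) (hq1 : q < 1) :
    min (1 - j * p) ((1 - q) ^ j) + j * min p (q * (1 - q) ^ (j - 1)) ≥
      1 - j * |p - q| - j * ((j : ℝ) - 1) * q ^ 2 := by
  have hj1 : (1 : ℝ) ≤ (j : ℝ) := by exact_mod_cast hj
  have hb1 : 1 - (j : ℝ) * q ≤ (1 - q) ^ j := by
    have h := one_add_mul_le_pow (by linarith : (-2 : ℝ) ≤ -q) j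
    have : (1 : ℝ) + (j : ℝ) * (-q) = 1 - (j : ℝ) * q := by ring
    rw [this] at h
    have h2 : ((1 : ℝ) + -q) ^ j = (1 - q) ^ j := by ring_nf
    linarith [h2 ▸ h]
  have hcast : ((j - 1 : ℕ) : ℝ) = (j : ℝ) - 1 := by
    rw [Nat.cast_sub hj]; norm_num
  have hb2 : q - ((j : ℝ) - 1) * q ^ 2 ≤ q * (1 - q) ^ (j - 1) := by
    have h := one_add_mul_le_pow (by linarith : (-2 : ℝ) ≤ -q) (j - 1)
    rw [hcast] at h
    have h2 : ((1 : ℝ) + -q) ^ (j - 1) = (1 - q) ^ (j - 1) := by ring_nf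
    rw [h2] at h
    nlinarith [h, hq0.le]
  have hc0 : 0 ≤ ((j : ℝ) - 1) * q ^ 2 := by nlinarith
  rcases le_total p q with hpq | hpq
  · rw [abs_of_nonpos (by linarith : p - q ≤ 0)]
    have hA : 1 - (j : ℝ) * q ≤ min (1 - (j : ℝ) * p) ((1 - q) ^ j) :=
      le_min (by nlinarith) hb1
    have hB : p - ((j : ℝ) - 1) * q ^ 2 ≤ min p (q * (1 - q) ^ (j - 1)) :=
      le_min (by linarith) (by linarith)
    have hB' := mul_le_mul_of_nonneg_left hB (by positivity : (0 : ℝ) ≤ (j : ℝ))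
    nlinarith [hA, hB']
  · rw [abs_of_nonneg (by linarith : 0 ≤ p - q)]
    have hA : 1 - (j : ℝ) * p ≤ min (1 - (j : ℝ) * p) ((1 - q) ^ j) :=
      le_min le_rfl (by nlinarith)
    have hB : q - ((j : ℝ) - 1) * q ^ 2 ≤ min p (q * (1 - q) ^ (j - 1)) :=
      le_min (by linarith) hb2
    have hB' := mul_le_mul_of_nonneg_left hB (by positivity : (0 : ℝ) ≤ (j : ℝ))
    nlinarith [hA, hB']


theorem coupling_lemma
    {Ω Ω' : Type*} [MeasurableSpace Ω] [MeasurableSpace Ω']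
    (μ : Measure Ω) (μ' : Measure Ω') [IsProbabilityMeasure μ] [IsProbabilityMeasure μ']
    (j : ℕ) (hj : 1 ≤ j) (p q : ℝ) (hp0 : 0 < p) (hp1 : p < 1 / j) (hq0 : 0 < q) (hq1 : q < 1)
    (V : Fin j → Ω → ℕ) (hVmeas : ∀ i, Measurable (V i))
    (hVval : ∀ i ω, V i ω = 0 ∨ V i ω = 1)
    (hV0 : (μ {ω | ∀ i, V i ω = 0}).toReal = 1 - j * p)
    (hV1 : ∀ i, (μ {ω | V i ω = 1 ∧ ∀ l, l ≠ i → V l ω = 0}).toReal = p)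
    (W : Fin j → Ω' → ℕ) (hWmeas : ∀ i, Measurable (W i))
    (hWval : ∀ i ω, W i ω = 0 ∨ W i ω = 1)
    (hWindep : iIndepFun W μ')
    (hW1 : ∀ i, (μ' {ω | W i ω = 1}).toReal = q) :
    ∃ ν : Measure ((Fin j → ℕ) × (Fin j → ℕ)), IsProbabilityMeasure ν ∧
      ν.map Prod.fst = μ.map (fun ω i => V i ω) ∧
      ν.map Prod.snd = μ'.map (fun ω i => W i ω) ∧
      (ν {x | ∀ i, x.1 i = x.2 i}).toReal ≥ 1 - j * |p - q| - j * (j - 1) * q ^ 2 := by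
  classical
  set S := (Fin j → ℕ)
  have hVV : Measurable (fun ω i => V i ω) := measurable_pi_lambda _ hVmeas
  have hWW : Measurable (fun ω i => W i ω) := measurable_pi_lambda _ hWmeas
  set ρ : Measure S := μ.map (fun ω i => V i ω) with hρdef
  set σ : Measure S := μ'.map (fun ω i => W i ω) with hσdef
  haveI : IsProbabilityMeasure ρ := Measure.isProbabilityMeasure_map hVV.aemeasurable
  haveI : IsProbabilityMeasure σ := Measure.isProbabilityMeasure_map hWW.aemeasurable
  set x₀ : S := fun _ => 0 with hx₀def
  set e : Fin j → S := fun i l => if l = i then 1 else 0 with hedef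
  -- values of ρ
  have ha : (ρ {x₀}).toReal = 1 - j * p := by
    rw [hρdef, Measure.map_apply hVV (measurableSet_singleton _)]
    have : (fun ω i => V i ω) ⁻¹' {x₀} = {ω | ∀ i, V i ω = 0} := by
      ext ω; simp [hx₀def, funext_iff]
    rw [this, hV0]
  have hc : ∀ i, (ρ {e i}).toReal = p := by
    intro i
    rw [hρdef, Measure.map_apply hVV (measurableSet_singleton _)]
    have : (fun ω l => V l ω) ⁻¹' {e i} = {ω | V i ω = 1 ∧ ∀ l, l ≠ i → V l ω = 0} := by
      ext ω
      simp only [Set.mem_preimage, Set.mem_singleton_iff, funext_iff, hedef, Set.mem_setOf_eq]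
      constructor
      · intro h
        refine ⟨by simpa using h i, fun l hl => by simpa [hl] using h l⟩
      · rintro ⟨h1, h2⟩ l
        by_cases hl : l = i
        · subst hl; simpa using h1
        · simpa [hl] using h2 l hl
    rw [this, hV1 i]
  -- per-coordinate values of W
  have hW1set : ∀ l : Fin j, {ω | W l ω = 1} = W l ⁻¹' {1} := fun l => rfl
  have hW1' : ∀ l, μ' (W l ⁻¹' {1}) = ENNReal.ofReal q := by
    intro l
    rw [← ENNReal.ofReal_toReal (measure_ne_top μ' _), ← hW1set, hW1 l]
  have hW0' : ∀ l, μ' (W l ⁻¹' {0}) = 1 - ENNReal.ofReal q := by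
    intro l
    have hcompl : W l ⁻¹' {0} = (W l ⁻¹' {1})ᶜ := by
      ext ω
      rcases hWval l ω with h | h <;> simp [h]
    rw [hcompl, measure_compl (hWmeas l (measurableSet_singleton _)) (measure_ne_top μ' _),
      measure_univ, hW1' l]
  have hq01 : ENNReal.ofReal q ≤ 1 := by
    rw [← ENNReal.ofReal_one]
    exact ENNReal.ofReal_le_ofReal hq1.le
  have hW0toReal : ∀ l, (μ' (W l ⁻¹' {0})).toReal = 1 - q := by
    intro l
    rw [hW0' l, ENNReal.toReal_sub_of_le hq01 ENNReal.one_ne_top, ENNReal.toReal_one,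
      ENNReal.toReal_ofReal hq0.le]
  -- σ of singletons via independence
  have hσw : ∀ w : S, σ {w} = ∏ l, μ' (W l ⁻¹' {w l}) := by
    intro w
    rw [hσdef, Measure.map_apply hWW (measurableSet_singleton _)]
    have : (fun ω l => W l ω) ⁻¹' {w} = ⋂ l, W l ⁻¹' {w l} := by
      ext ω; simp [funext_iff]
    rw [this]
    exact hWindep.meas_iInter fun l => ⟨{w l}, measurableSet_singleton _, rfl⟩
  have hb : (σ {x₀}).toReal = (1 - q) ^ j := by
    rw [hσw x₀, ENNReal.toReal_prod]
    calc (∏ l, (μ' (W l ⁻¹' {x₀ l})).toReal) = ∏ l : Fin j, (1 - q) := by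
          refine Finset.prod_congr rfl fun l _ => ?_
          rw [show x₀ l = 0 from rfl, hW0toReal l]
      _ = (1 - q) ^ j := by rw [Finset.prod_const, Finset.card_univ, Fintype.card_fin]
  have hd : ∀ i, (σ {e i}).toReal = q * (1 - q) ^ (j - 1) := by
    intro i
    rw [hσw (e i), ENNReal.toReal_prod,
      ← Finset.mul_prod_erase Finset.univ _ (Finset.mem_univ i)]
    have h1 : (μ' (W i ⁻¹' {e i i})).toReal = q := by
      rw [show e i i = 1 by simp [hedef], hW1' i, ENNReal.toReal_ofReal hq0.le]
    have h2 : ∏ l ∈ Finset.univ.erase i, (μ' (W l ⁻¹' {e i l})).toReal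
        = (1 - q) ^ (j - 1) := by
      calc ∏ l ∈ Finset.univ.erase i, (μ' (W l ⁻¹' {e i l})).toReal
          = ∏ _l ∈ Finset.univ.erase i, (1 - q) := by
            refine Finset.prod_congr rfl fun l hl => ?_
            have hne : l ≠ i := Finset.ne_of_mem_erase hl
            rw [show e i l = 0 by simp [hedef, hne], hW0toReal l]
        _ = (1 - q) ^ (j - 1) := by
            rw [Finset.prod_const, Finset.card_erase_of_mem (Finset.mem_univ i),
              Finset.card_univ, Fintype.card_fin]
    rw [h1, h2]
  -- get the coupling
  obtain ⟨ν, hνprob, hνfst, hνsnd, hνdiag⟩ := exists_max_coupling ρ σ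
  refine ⟨ν, hνprob, hνfst, hνsnd, ?_⟩
  have hseteq : {x : S × S | ∀ i, x.1 i = x.2 i} = {x : S × S | x.1 = x.2} := by
    ext x; exact funext_iff.symm
  rw [hseteq]
  -- finite sub-sum
  set g : S → ℝ≥0∞ := fun x => min (ρ {x}) (σ {x}) with hgdef
  have hgne : ∀ x, g x ≠ ∞ := fun x =>
    ((min_le_left _ _).trans_lt (measure_lt_top ρ _)).ne
  have he_inj : Function.Injective e := by
    intro i i' h
    by_contra hne
    have := congrFun h i
    rw [hedef] at this
    simp only [if_pos rfl, if_neg hne] at this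
    exact one_ne_zero this
  have hx₀notmem : x₀ ∉ Finset.image e Finset.univ := by
    simp only [Finset.mem_image, Finset.mem_univ, true_and, not_exists]
    intro i h
    have := congrFun h i
    simp [hedef, hx₀def] at this
  set F : Finset S := insert x₀ (Finset.image e Finset.univ) with hFdef
  have hsumF : ∑ x ∈ F, g x = g x₀ + ∑ i, g (e i) := by
    rw [hFdef, Finset.sum_insert hx₀notmem,
      Finset.sum_image (fun i _ i' _ h => he_inj h)]
  have hFle : ∑ x ∈ F, g x ≤ ν {x : S × S | x.1 = x.2} :=
    le_trans (ENNReal.sum_le_tsum F) hνdiag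
  have hνne : ν {x : S × S | x.1 = x.2} ≠ ∞ := measure_ne_top ν _
  have htoReal : (∑ x ∈ F, g x).toReal ≤ (ν {x : S × S | x.1 = x.2}).toReal :=
    ENNReal.toReal_le_toReal (ne_top_of_le_ne_top hνne hFle) hνne |>.mpr hFle
  have hsumFtoReal : (∑ x ∈ F, g x).toReal
      = min (1 - j * p) ((1 - q) ^ j) + j * min p (q * (1 - q) ^ (j - 1)) := by
    rw [hsumF, ENNReal.toReal_add (hgne x₀) (by
      exact (ENNReal.sum_lt_top.mpr fun i _ => (hgne (e i)).lt_top).ne),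
      ENNReal.toReal_sum (fun i _ => hgne (e i))]
    have h1 : (g x₀).toReal = min (1 - j * p) ((1 - q) ^ j) := by
      rw [hgdef, ENNReal.toReal_min (measure_ne_top ρ _) (measure_ne_top σ _), ha, hb]
    have h2 : ∀ i, (g (e i)).toReal = min p (q * (1 - q) ^ (j - 1)) := fun i => by
      rw [hgdef, ENNReal.toReal_min (measure_ne_top ρ _) (measure_ne_top σ _), hc i, hd i]
    rw [h1]
    congr 1
    rw [Finset.sum_congr rfl fun i _ => h2 i, Finset.sum_const, Finset.card_univ,
      Fintype.card_fin, nsmul_eq_mul]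
  have harith := arith_lemma j hj p q hp0 hq0 hq1
  calc (1 : ℝ) - j * |p - q| - j * ((j : ℝ) - 1) * q ^ 2
      ≤ min (1 - j * p) ((1 - q) ^ j) + j * min p (q * (1 - q) ^ (j - 1)) := harith
    _ = (∑ x ∈ F, g x).toReal := hsumFtoReal.symm
    _ ≤ (ν {x : S × S | x.1 = x.2}).toReal := htoReal
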